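/- In the construction of the previous WVC reduction: if X is a vertex cover of G^F with w_F(X) ≤ k_F = (n/2 − |F|)(k+2) + k, then |X ∩ V₁^F| = n/2 − |F| and |X ∩ V₂^F| ≤ n/2 − |F| + k. -/

import Mathlib

def PerfM {V : Type*} (G : SimpleGraph V) (M : Set (Sym2 V)) : Prop :=
  M ⊆ G.edgeSet ∧ ∀ v : V, ∃! e, e ∈ M ∧ v ∈ e

def GF {V : Type*} (G : SimpleGraph V) (F : Finset (Sym2 V)) :
    SimpleGraph ({v : V // ∀ e ∈ F, v ∉ e} ⊕ V) where
  Adj x y :=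
    match x, y with
    | Sum.inl a, Sum.inl b => G.Adj a.1 b.1
    | Sum.inl a, Sum.inr b => a.1 = b
    | Sum.inr a, Sum.inl b => b.1 = a
    | Sum.inr a, Sum.inr b => G.Adj a b
  symm := by
    refine ⟨?_⟩
    rintro (a | a) (b | b) h
    · exact h.symm
    · exact h
    · exact h
    · exact h.symm
  loopless := by
    refine ⟨?_⟩
    rintro (a | a) h
    · exact G.loopless.irrefl a.1 h
    · exact G.loopless.irrefl a h

/-- If `X` is a vertex cover of `G^F` of weight at most `k_F = (n/2 - |F|)(k+2) + k`,
then `|X ∩ V₁^F| = n/2 - |F|` and `|X ∩ V₂^F| ≤ n/2 - |F| + k`. -/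
theorem stmt16 {V : Type*} [Fintype V] (G : SimpleGraph V)
    (M F : Finset (Sym2 V)) (hM : PerfM G ↑M) (hF : F ⊆ M) (k : ℕ)
    (X : Finset ({v : V // ∀ e ∈ F, v ∉ e} ⊕ V))
    (hcover : ∀ x y, (GF G F).Adj x y → x ∈ X ∨ y ∈ X)
    (hw : (∑ x ∈ X, Sum.elim (fun _ => k + 1) (fun _ => 1) x) ≤
        (Fintype.card V / 2 - F.card) * (k + 2) + k) :
    (X.filter (fun x => x.isLeft = true)).card = Fintype.card V / 2 - F.card ∧
    (X.filter (fun x => x.isRight = true)).card ≤ Fintype.card V / 2 - F.card + k := by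
  classical
  obtain ⟨hMe, hMu⟩ := hM
  choose f hf using fun v => (hMu v).exists
  have huniq : ∀ (v : V) (e : Sym2 V), e ∈ M → v ∈ e → e = f v := by
    intro v e he hv
    exact (hMu v).unique ⟨Finset.mem_coe.mpr he, hv⟩ (hf v)
  -- |V| = 2 * |M|
  have hcardV : Fintype.card V = 2 * M.card := by
    have h1 : Fintype.card V = ∑ e ∈ M, (Finset.univ.filter (fun v => f v = e)).card := by
      rw [← Finset.card_univ]
      exact Finset.card_eq_sum_card_fiberwise (fun v _ => Finset.mem_coe.mp (hf v).1)
    have h2 : ∀ e ∈ M, (Finset.univ.filter (fun v => f v = e)).card = 2 := by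
      intro e he
      induction e using Sym2.ind with
      | _ a b =>
        have hadj : G.Adj a b := hMe (Finset.mem_coe.mpr he)
        have hfil : Finset.univ.filter (fun v => f v = s(a, b)) = {a, b} := by
          ext v
          simp only [Finset.mem_filter, Finset.mem_univ, true_and, Finset.mem_insert,
            Finset.mem_singleton]
          constructor
          · intro hv
            have : v ∈ f v := (hf v).2
            rw [hv] at this
            exact Sym2.mem_iff.mp this
          · intro hv
            have : v ∈ s(a, b) := Sym2.mem_iff.mpr hv
            exact (huniq v _ he this).symm
        rw [hfil, Finset.card_insert_of_notMem (by simp [hadj.ne]), Finset.card_singleton]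
    rw [h1, Finset.sum_congr rfl h2, Finset.sum_const, smul_eq_mul, mul_comm]
  -- right matching gives a lower bound on the right part of X
  have hexR : ∀ e : Sym2 V, ∃ x : {v : V // ∀ e ∈ F, v ∉ e} ⊕ V,
      e ∈ M → x ∈ X ∧ x.isRight = true ∧ Sum.elim Subtype.val id x ∈ e := by
    intro e
    induction e using Sym2.ind with
    | _ a b =>
      by_cases he : s(a, b) ∈ M
      · have hadj : G.Adj a b := hMe (Finset.mem_coe.mpr he)
        rcases hcover (Sum.inr a) (Sum.inr b) hadj with h | h
        · exact ⟨Sum.inr a, fun _ => ⟨h, rfl, by simp⟩⟩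
        · exact ⟨Sum.inr b, fun _ => ⟨h, rfl, by simp⟩⟩
      · exact ⟨Sum.inr a, fun h => absurd h he⟩
  choose fR hfR using hexR
  have hR : M.card ≤ (X.filter (fun x => x.isRight = true)).card := by
    apply Finset.card_le_card_of_injOn fR
    · intro e he
      obtain ⟨h1, h2, _⟩ := hfR e he
      exact Finset.mem_filter.mpr ⟨h1, h2⟩
    · intro e1 h1 e2 h2 heq
      obtain ⟨_, _, hv1⟩ := hfR e1 h1
      obtain ⟨_, _, hv2⟩ := hfR e2 h2
      rw [heq] at hv1
      exact (huniq _ _ h1 hv1).trans (huniq _ _ h2 hv2).symm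
  -- left matching (from M \ F) gives a lower bound on the left part of X
  have hexL : ∀ e : Sym2 V, ∃ x : {v : V // ∀ e ∈ F, v ∉ e} ⊕ V,
      e ∈ M \ F → x ∈ X ∧ x.isLeft = true ∧ Sum.elim Subtype.val id x ∈ e := by
    intro e
    induction e using Sym2.ind with
    | _ a b =>
      by_cases he : s(a, b) ∈ M \ F
      · obtain ⟨heM, heF⟩ := Finset.mem_sdiff.mp he
        have hadj : G.Adj a b := hMe (Finset.mem_coe.mpr heM)
        have ha : ∀ e' ∈ F, a ∉ e' := by
          intro e' he' hae'
          have heq : s(a, b) = e' :=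
            (huniq a s(a, b) heM (by simp)).trans (huniq a e' (hF he') hae').symm
          rw [heq] at heF
          exact heF he'
        have hb : ∀ e' ∈ F, b ∉ e' := by
          intro e' he' hbe'
          have heq : s(a, b) = e' :=
            (huniq b s(a, b) heM (by simp)).trans (huniq b e' (hF he') hbe').symm
          rw [heq] at heF
          exact heF he'
        rcases hcover (Sum.inl ⟨a, ha⟩) (Sum.inl ⟨b, hb⟩) hadj with h | h
        · exact ⟨Sum.inl ⟨a, ha⟩, fun _ => ⟨h, rfl, by simp⟩⟩
        · exact ⟨Sum.inl ⟨b, hb⟩, fun _ => ⟨h, rfl, by simp⟩⟩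
      · exact ⟨Sum.inr a, fun h => absurd h he⟩
  choose fL hfL using hexL
  have hL : M.card - F.card ≤ (X.filter (fun x => x.isLeft = true)).card := by
    rw [← Finset.card_sdiff_of_subset hF]
    apply Finset.card_le_card_of_injOn fL
    · intro e he
      obtain ⟨h1, h2, _⟩ := hfL e he
      exact Finset.mem_filter.mpr ⟨h1, h2⟩
    · intro e1 h1 e2 h2 heq
      obtain ⟨_, _, hv1⟩ := hfL e1 h1
      obtain ⟨_, _, hv2⟩ := hfL e2 h2
      rw [heq] at hv1
      exact (huniq _ _ (Finset.mem_sdiff.mp h1).1 hv1).trans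
        (huniq _ _ (Finset.mem_sdiff.mp h2).1 hv2).symm
  -- the weight of X
  set L := (X.filter (fun x => x.isLeft = true)).card with hLdef
  set R := (X.filter (fun x => x.isRight = true)).card with hRdef
  have hsum : (∑ x ∈ X, Sum.elim (fun _ => k + 1) (fun _ => 1) x) = L * (k + 1) + R := by
    rw [← Finset.sum_filter_add_sum_filter_not X (fun x => x.isLeft = true)]
    congr 1
    · rw [Finset.sum_congr rfl
        (g := fun _ => k + 1) (fun x hx => by
          rcases x with a | a
          · rfl
          · simp at hx),
        Finset.sum_const, smul_eq_mul, mul_comm]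
    · have hfil : X.filter (fun x => ¬x.isLeft = true) = X.filter (fun x => x.isRight = true) := by
        apply Finset.filter_congr
        intro x _
        rcases x with a | a <;> simp
      rw [hfil]
      rw [Finset.sum_congr rfl
        (g := fun _ => 1) (fun x hx => by
          rcases x with a | a
          · simp at hx
          · rfl),
        Finset.sum_const, smul_eq_mul, mul_one]
  -- arithmetic
  have hhalf : Fintype.card V / 2 = M.card := by omega
  rw [hhalf] at hw ⊢
  rw [hsum] at hw
  have hMF : F.card ≤ M.card := Finset.card_le_card hF
  set a := M.card - F.card with hadef
  have ham : a ≤ M.card := Nat.sub_le _ _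
  have hLa : L ≤ a := by
    by_contra hcon
    push_neg at hcon
    have h1 : (a + 1) * (k + 1) ≤ L * (k + 1) := Nat.mul_le_mul_right _ hcon
    nlinarith
  have hLeq : L = a := le_antisymm hLa hL
  refine ⟨hLeq, ?_⟩
  rw [hLeq] at hw
  nlinarith
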